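/- (Fixed number of outlier components: random limiting radius.) In the high-dimensional geometric setting, assume the outlier index set is fixed: I_out^{(d)} = I for all d, with |I| = K ∈ ℕ, and assume τ^{(d)}/d → r/K for some r ∈ [0,∞). Then (1/d) ‖X'^{(d)}‖² converges in distribution (indeed almost surely) to (r/K) Σ_{i ∈ I} (z_i')² + σ², i.e. to σ² plus (r/K) times a chi-squared random variable with K degrees of freedom, and (1/d) ‖X^{(d)} − X'^{(d)}‖² converges in distribution (indeed almost surely) to (r/K) Σ_{i ∈ I} (z_i')² + 2σ², as d → ∞. -/

import Mathlib

open MeasureTheory ProbabilityTheory Filter Finset Asymptotics ENNReal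
open Real
open scoped NNReal

lemma exp_integrable : Integrable (fun x : ℝ => Real.exp (-x^2/2)) := by
  have := integrable_exp_neg_mul_sq (b := (1:ℝ)/2) (by norm_num)
  convert this using 2 with x
  ring_nf

lemma mul_exp_integrable : Integrable (fun x : ℝ => x * Real.exp (-x^2/2)) := by
  have := integrable_mul_exp_neg_mul_sq (b := (1:ℝ)/2) (by norm_num)
  convert this using 2 with x
  ring_nf

lemma sq_mul_exp_integrable : Integrable (fun x : ℝ => x^2 * Real.exp (-x^2/2)) := by
  have := integrable_rpow_mul_exp_neg_mul_sq (b := (1:ℝ)/2) (s := 2) (by norm_num) (by norm_num)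
  convert this using 2 with x
  rw [show ((2:ℝ) = ((2:ℕ):ℝ)) by norm_num, Real.rpow_natCast]
  ring_nf

lemma exp_integral : ∫ x : ℝ, Real.exp (-x^2/2) = Real.sqrt (2 * Real.pi) := by
  have := integral_gaussian ((1:ℝ)/2)
  rw [show Real.pi / (1/2) = 2 * Real.pi by ring] at this
  rw [← this]
  congr 1 with x
  ring_nf

lemma tendsto_neg_sq_half_atTop : Tendsto (fun x : ℝ => -x^2/2) atTop atBot := by
  have h1 : Tendsto (fun x : ℝ => x^2) atTop atTop := tendsto_pow_atTop two_ne_zero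
  have h2 : Tendsto (fun x : ℝ => -x^2) atTop atBot := tendsto_neg_atTop_atBot.comp h1
  exact h2.atBot_div_const two_pos

lemma tendsto_neg_sq_half_atBot : Tendsto (fun x : ℝ => -x^2/2) atBot atBot := by
  have h1 := tendsto_neg_sq_half_atTop.comp tendsto_neg_atBot_atTop
  convert h1 using 2 with x
  simp [Function.comp]

lemma tendsto_exp_neg_sq_atTop : Tendsto (fun x : ℝ => Real.exp (-x^2/2)) atTop (nhds 0) :=
  Real.tendsto_exp_atBot.comp tendsto_neg_sq_half_atTop

lemma tendsto_exp_neg_sq_atBot : Tendsto (fun x : ℝ => Real.exp (-x^2/2)) atBot (nhds 0) :=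
  Real.tendsto_exp_atBot.comp tendsto_neg_sq_half_atBot

lemma tendsto_mul_exp_neg_sq_atTop : Tendsto (fun x : ℝ => x * Real.exp (-x^2/2)) atTop (nhds 0) := by
  have h := rpow_mul_exp_neg_mul_sq_isLittleO_exp_neg (b := (1:ℝ)/2) (by norm_num) 1
  have hexp : Tendsto (fun x : ℝ => Real.exp (-(1/2) * x)) atTop (nhds 0) := by
    apply Real.tendsto_exp_atBot.comp
    have : Tendsto (fun x : ℝ => -((1/2) * x)) atTop atBot :=
      tendsto_neg_atTop_atBot.comp (tendsto_id.const_mul_atTop (by norm_num))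
    convert this using 2 with x
    ring
  have h2 : Tendsto (fun x : ℝ => x ^ (1:ℝ) * Real.exp (-(1/2) * x^2)) atTop (nhds 0) :=
    h.isBigO.trans_tendsto hexp
  convert h2 using 2 with x
  rw [Real.rpow_one]
  ring_nf

lemma tendsto_mul_exp_neg_sq_atBot : Tendsto (fun x : ℝ => x * Real.exp (-x^2/2)) atBot (nhds 0) := by
  have h1 := tendsto_mul_exp_neg_sq_atTop.comp tendsto_neg_atBot_atTop
  have h2 : (fun x : ℝ => -x * Real.exp (-x^2/2)) = ((fun x : ℝ => x * Real.exp (-x^2/2)) ∘ fun x => -x) := by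
    funext x; simp [Function.comp]
  have h3 : Tendsto (fun x : ℝ => -x * Real.exp (-x^2/2)) atBot (nhds 0) := h2 ▸ h1
  have := h3.neg
  simp only [neg_neg, neg_zero] at this
  convert this using 2 with x
  ring

lemma mul_exp_integral : ∫ x : ℝ, x * Real.exp (-x^2/2) = 0 := by
  have hderiv : ∀ x : ℝ, HasDerivAt (fun x : ℝ => -Real.exp (-x^2/2)) (x * Real.exp (-x^2/2)) x := by
    intro x
    have h1 : HasDerivAt (fun x : ℝ => -x^2/2) (-x) x := by
      have := ((hasDerivAt_pow 2 x).div_const 2).neg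
      convert this using 1
      · rfl
      · rfl
      · funext y; simp only [Pi.neg_apply]; ring
      · norm_num
    have h2 := h1.exp
    have := h2.neg
    convert this using 1
    · rfl
    · rfl
    · rfl
    rw [mul_comm]
    ring_nf
  have := integral_of_hasDerivAt_of_tendsto hderiv mul_exp_integrable
    (tendsto_exp_neg_sq_atBot.neg) (tendsto_exp_neg_sq_atTop.neg)
  simpa using this

lemma sq_mul_exp_integral : ∫ x : ℝ, x^2 * Real.exp (-x^2/2) = Real.sqrt (2 * Real.pi) := by
  have hderiv : ∀ x : ℝ, HasDerivAt (fun x : ℝ => -x * Real.exp (-x^2/2))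
      (x^2 * Real.exp (-x^2/2) - Real.exp (-x^2/2)) x := by
    intro x
    have h1 : HasDerivAt (fun x : ℝ => -x^2/2) (-x) x := by
      have := ((hasDerivAt_pow 2 x).div_const 2).neg
      convert this using 1
      · rfl
      · rfl
      · funext y; simp only [Pi.neg_apply]; ring
      · norm_num
    have h2 : HasDerivAt (fun x : ℝ => Real.exp (-x^2/2)) (Real.exp (-x^2/2) * (-x)) x := h1.exp
    have h3 : HasDerivAt (fun x : ℝ => -x) (-1) x := (hasDerivAt_id x).neg
    have := h3.mul h2
    convert this using 1
    · rfl
    · rfl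
    · rfl
    ring
  have hint : Integrable (fun x : ℝ => x^2 * Real.exp (-x^2/2) - Real.exp (-x^2/2)) :=
    sq_mul_exp_integrable.sub exp_integrable
  have hbot : Tendsto (fun x : ℝ => -x * Real.exp (-x^2/2)) atBot (nhds 0) := by
    simpa [neg_mul] using tendsto_mul_exp_neg_sq_atBot.neg
  have htop : Tendsto (fun x : ℝ => -x * Real.exp (-x^2/2)) atTop (nhds 0) := by
    simpa [neg_mul] using tendsto_mul_exp_neg_sq_atTop.neg
  have := integral_of_hasDerivAt_of_tendsto hderiv hint hbot htop
  simp only [neg_zero, sub_zero, neg_mul] at this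
  rw [integral_sub sq_mul_exp_integrable exp_integrable] at this
  have h0 : (∫ x : ℝ, x^2 * Real.exp (-x^2/2)) - ∫ x : ℝ, Real.exp (-x^2/2) = 0 := by
    simpa using this
  have := exp_integral
  linarith

lemma gaussianPDFReal_zero_one (x : ℝ) :
    gaussianPDFReal 0 1 x = (Real.sqrt (2 * Real.pi))⁻¹ * Real.exp (-x^2/2) := by
  simp [gaussianPDFReal]

lemma gaussianReal_eq_withDensity :
    gaussianReal 0 1 = volume.withDensity
      (fun x => ((Real.toNNReal (gaussianPDFReal 0 1 x) : ℝ≥0) : ℝ≥0∞)) := by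
  rw [gaussianReal_of_var_ne_zero 0 one_ne_zero]
  rfl

lemma integral_gaussianReal_eq (g : ℝ → ℝ) :
    ∫ x, g x ∂(gaussianReal 0 1) = ∫ x, gaussianPDFReal 0 1 x * g x := by
  rw [gaussianReal_eq_withDensity,
    integral_withDensity_eq_integral_smul (f := fun x => (gaussianPDFReal 0 1 x).toNNReal) (measurable_real_toNNReal.comp (measurable_gaussianPDFReal 0 1)) g]
  congr 1 with x
  simp [NNReal.smul_def, Real.coe_toNNReal _ (gaussianPDFReal_nonneg 0 1 x)]

lemma integrable_gaussianReal_iff {g : ℝ → ℝ} :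
    Integrable g (gaussianReal 0 1) ↔ Integrable (fun x => gaussianPDFReal 0 1 x * g x) := by
  rw [gaussianReal_eq_withDensity,
    integrable_withDensity_iff_integrable_smul (f := fun x => (gaussianPDFReal 0 1 x).toNNReal) (measurable_real_toNNReal.comp (measurable_gaussianPDFReal 0 1))]
  constructor <;> intro h <;> refine h.congr ?_ <;> filter_upwards with x <;>
    simp [NNReal.smul_def, Real.coe_toNNReal _ (gaussianPDFReal_nonneg 0 1 x)]

lemma sqrt_two_pi_pos : (0:ℝ) < Real.sqrt (2 * Real.pi) :=
  Real.sqrt_pos.2 (by positivity)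

lemma integrable_id_gaussian : Integrable (fun x : ℝ => x) (gaussianReal 0 1) := by
  rw [integrable_gaussianReal_iff]
  have : (fun x : ℝ => gaussianPDFReal 0 1 x * x)
      = fun x => (Real.sqrt (2 * Real.pi))⁻¹ * (x * Real.exp (-x^2/2)) := by
    funext x; rw [gaussianPDFReal_zero_one]; ring
  rw [this]
  exact mul_exp_integrable.const_mul _

lemma integral_id_gaussian : ∫ x, x ∂(gaussianReal 0 1) = 0 := by
  rw [integral_gaussianReal_eq]
  have : (fun x : ℝ => gaussianPDFReal 0 1 x * x)
      = fun x => (Real.sqrt (2 * Real.pi))⁻¹ * (x * Real.exp (-x^2/2)) := by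
    funext x; rw [gaussianPDFReal_zero_one]; ring
  rw [this, integral_const_mul, mul_exp_integral, mul_zero]

lemma integrable_sq_gaussian : Integrable (fun x : ℝ => x^2) (gaussianReal 0 1) := by
  rw [integrable_gaussianReal_iff]
  have : (fun x : ℝ => gaussianPDFReal 0 1 x * x^2)
      = fun x => (Real.sqrt (2 * Real.pi))⁻¹ * (x^2 * Real.exp (-x^2/2)) := by
    funext x; rw [gaussianPDFReal_zero_one]; ring
  rw [this]
  exact sq_mul_exp_integrable.const_mul _

lemma integral_sq_gaussian : ∫ x, x^2 ∂(gaussianReal 0 1) = 1 := by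
  rw [integral_gaussianReal_eq]
  have : (fun x : ℝ => gaussianPDFReal 0 1 x * x^2)
      = fun x => (Real.sqrt (2 * Real.pi))⁻¹ * (x^2 * Real.exp (-x^2/2)) := by
    funext x; rw [gaussianPDFReal_zero_one]; ring
  rw [this, integral_const_mul, sq_mul_exp_integral]
  exact inv_mul_cancel₀ (ne_of_gt sqrt_two_pi_pos)

section Transfer
variable {Ω : Type} [MeasureSpace Ω] [IsProbabilityMeasure (ℙ : Measure Ω)]

lemma integrable_of_gaussian {f : Ω → ℝ} (hf : Measurable f)
    (hg : Measure.map f ℙ = gaussianReal 0 1) : Integrable f ℙ := by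
  have := (integrable_map_measure (g := fun x : ℝ => x)
    (by rw [hg]; exact integrable_id_gaussian.aestronglyMeasurable) hf.aemeasurable).mp
    (by rw [hg]; exact integrable_id_gaussian)
  exact this

lemma integrable_sq_of_gaussian {f : Ω → ℝ} (hf : Measurable f)
    (hg : Measure.map f ℙ = gaussianReal 0 1) : Integrable (fun ω => (f ω)^2) ℙ := by
  have := (integrable_map_measure (g := fun x : ℝ => x^2)
    (by rw [hg]; exact integrable_sq_gaussian.aestronglyMeasurable) hf.aemeasurable).mp
    (by rw [hg]; exact integrable_sq_gaussian)
  exact this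

lemma integral_of_gaussian {f : Ω → ℝ} (hf : Measurable f)
    (hg : Measure.map f ℙ = gaussianReal 0 1) : ∫ ω, f ω ∂ℙ = 0 := by
  have h := integral_map (f := fun x : ℝ => x) hf.aemeasurable
    (by rw [hg]; exact integrable_id_gaussian.aestronglyMeasurable)
  rw [hg, integral_id_gaussian] at h
  exact h.symm

lemma integral_sq_of_gaussian {f : Ω → ℝ} (hf : Measurable f)
    (hg : Measure.map f ℙ = gaussianReal 0 1) : ∫ ω, (f ω)^2 ∂ℙ = 1 := by
  have h := integral_map (f := fun x : ℝ => x^2) hf.aemeasurable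
    (by rw [hg]; exact integrable_sq_gaussian.aestronglyMeasurable)
  rw [hg, integral_sq_gaussian] at h
  exact h.symm

end Transfer

lemma tendsto_succ_div {A : ℝ} {G : ℕ → ℝ}
    (hG : Tendsto (fun n : ℕ => (∑ i ∈ range n, G i)/n) atTop (nhds A)) :
    Tendsto (fun m : ℕ => (∑ i ∈ range (m+1), G i)/m) atTop (nhds A) := by
  have h1 : Tendsto (fun m : ℕ => (∑ i ∈ range (m+1), G i)/(↑(m+1) : ℝ)) atTop (nhds A) :=
    hG.comp (tendsto_add_atTop_nat 1)
  have h2 : Tendsto (fun m : ℕ => ((m:ℝ)+1)/m) atTop (nhds 1) := by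
    have h := (tendsto_const_nhds (x := (1:ℝ)) (f := (atTop : Filter ℕ))).add
      tendsto_one_div_atTop_nhds_zero_nat
    rw [add_zero] at h
    apply h.congr'
    filter_upwards [eventually_ge_atTop 1] with m hm
    have hm0 : (m:ℝ) ≠ 0 := Nat.cast_ne_zero.2 (by omega)
    field_simp
  have := h1.mul h2
  rw [mul_one] at this
  apply this.congr'
  filter_upwards [eventually_ge_atTop 1] with m hm
  have hm0 : (m:ℝ) ≠ 0 := Nat.cast_ne_zero.2 (by omega)
  have hm1 : ((m+1:ℕ):ℝ) = (m:ℝ)+1 := by push_cast; ring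
  rw [hm1]
  have hm2 : (m:ℝ)+1 ≠ 0 := by positivity
  field_simp

lemma det_main (I : Finset ℕ) (hI1 : ∀ i ∈ I, 1 ≤ i) (F : ℕ → ℕ → ℝ) (G : ℕ → ℝ)
    (c : ℕ → ℝ) (A : ℝ)
    (hF : ∀ i ∈ I, Tendsto (fun m : ℕ => F m i / m) atTop (nhds (c i)))
    (hFG : ∀ m, ∀ i, i ∉ I → F m i = G i)
    (hG : Tendsto (fun n : ℕ => (∑ i ∈ range n, G i)/n) atTop (nhds A)) :
    Tendsto (fun m : ℕ => (∑ i ∈ Icc 1 m, F m i)/m) atTop (nhds ((∑ i ∈ I, c i) + A)) := by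
  classical
  set N := I.sup id with hN
  set C := ∑ i ∈ insert 0 I, G i with hC
  have key : ∀ᶠ m in atTop, (∑ i ∈ I, F m i/(m:ℝ)) +
      ((∑ i ∈ range (m+1), G i) - C)/m = (∑ i ∈ Icc 1 m, F m i)/m := by
    filter_upwards [eventually_ge_atTop N, eventually_ge_atTop 1] with m hm hm1
    have hsub : I ⊆ Icc 1 m := fun i hi =>
      mem_Icc.2 ⟨hI1 i hi, le_trans (Finset.le_sup (f := id) hi) hm⟩
    have hsub2 : insert 0 I ⊆ range (m+1) := by
      intro i hi
      rcases Finset.mem_insert.1 hi with h0 | hiI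
      · simp [h0]
      · exact Finset.mem_range.2 (Nat.lt_succ_of_le (le_trans (Finset.le_sup (f := id) hiI) hm))
    have hset : Icc 1 m \ I = range (m+1) \ insert 0 I := by
      ext i
      simp only [Finset.mem_sdiff, mem_Icc, Finset.mem_range, Finset.mem_insert]
      constructor
      · rintro ⟨⟨h1, h2⟩, h3⟩
        refine ⟨by omega, ?_⟩
        rintro (rfl | h)
        · omega
        · exact h3 h
      · rintro ⟨h1, h2⟩
        push_neg at h2
        exact ⟨⟨by omega, by omega⟩, h2.2⟩
    have e1 : ∑ i ∈ Icc 1 m, F m i = (∑ i ∈ Icc 1 m \ I, G i) + ∑ i ∈ I, F m i := by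
      rw [← Finset.sum_sdiff hsub]
      congr 1
      exact Finset.sum_congr rfl fun i hi => hFG m i (Finset.mem_sdiff.1 hi).2
    have e2 : ∑ i ∈ Icc 1 m \ I, G i = (∑ i ∈ range (m+1), G i) - C := by
      rw [hset, hC]
      exact Finset.sum_sdiff_eq_sub hsub2
    rw [e1, e2, add_div, Finset.sum_div]
    ring
  have h_first : Tendsto (fun m : ℕ => ∑ i ∈ I, F m i/(m:ℝ)) atTop (nhds (∑ i ∈ I, c i)) :=
    tendsto_finset_sum I fun i hi => hF i hi
  have h_second : Tendsto (fun m : ℕ => ((∑ i ∈ range (m+1), G i) - C)/(m:ℝ)) atTop (nhds A) := by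
    have hA := tendsto_succ_div hG
    have hCd := tendsto_const_div_atTop_nhds_zero_nat C
    have := hA.sub hCd
    rw [sub_zero] at this
    apply this.congr
    intro m
    rw [sub_div]
  exact (h_first.add h_second).congr' key

/-- `a ≻ b`: the ratio `a n / b n` tends to a limit in `(1, ∞]`. -/
def SuccSeq (a b : ℕ → ℝ) : Prop :=
  (∃ L : ℝ, 1 < L ∧ Filter.Tendsto (fun n => a n / b n) Filter.atTop (nhds L)) ∨
    Filter.Tendsto (fun n => a n / b n) Filter.atTop Filter.atTop

theorem stmt19
    {Ω : Type} [MeasureSpace Ω] [IsProbabilityMeasure (ℙ : Measure Ω)]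
    (σ : ℝ) (hσ : 0 < σ)
    (z z' : ℕ → Ω → ℝ)
    (hzmeas : ∀ i, Measurable (z i)) (hzmeas' : ∀ i, Measurable (z' i))
    (hindep : iIndepFun (Sum.elim z z') ℙ)
    (hgauss : ∀ i, Measure.map (z i) ℙ = gaussianReal 0 1)
    (hgauss' : ∀ i, Measure.map (z' i) ℙ = gaussianReal 0 1)
    (I : Finset ℕ) (hI1 : ∀ i ∈ I, 1 ≤ i)
    (KK : ℕ) (hKK : I.card = KK) (hKKpos : 0 < KK)
    (τ : ℕ → ℝ) (hτpos : ∀ m, 0 < τ m)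
    (r : ℝ) (hr0 : 0 ≤ r)
    (hτr : Tendsto (fun m => τ m / m) atTop (nhds (r / KK))) :
    ∀ᵐ ω ∂ℙ,
      Tendsto (fun m =>
          (∑ i ∈ Finset.Icc 1 m,
            (if i ∈ I then Real.sqrt (τ m) * z' i ω else σ * z' i ω) ^ 2) / m)
        atTop (nhds (r / KK * ∑ i ∈ I, (z' i ω) ^ 2 + σ ^ 2)) ∧
      Tendsto (fun m =>
          (∑ i ∈ Finset.Icc 1 m,
            (σ * z i ω -
              (if i ∈ I then Real.sqrt (τ m) * z' i ω else σ * z' i ω)) ^ 2) / m)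
        atTop (nhds (r / KK * ∑ i ∈ I, (z' i ω) ^ 2 + 2 * σ ^ 2)) := by
  have hmeas : ∀ k : ℕ ⊕ ℕ, Measurable (Sum.elim z z' k) := by
    rintro (i | i)
    exacts [hzmeas i, hzmeas' i]
  have hsq : Measurable (fun x : ℝ => x ^ 2) := measurable_id.pow_const 2
  -- first strong law: squares of z'
  have slln1 : ∀ᵐ ω ∂ℙ,
      Tendsto (fun n : ℕ => (∑ i ∈ range n, (z' i ω) ^ 2) / n) atTop (nhds 1) := by
    have hint : Integrable (fun ω => (z' 0 ω) ^ 2) ℙ :=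
      integrable_sq_of_gaussian (hzmeas' 0) (hgauss' 0)
    have hpair : Pairwise (Function.onFun (IndepFun · · ℙ) fun i ω => (z' i ω) ^ 2) := by
      intro i j hij
      have h : IndepFun (z' i) (z' j) ℙ :=
        hindep.indepFun (i := Sum.inr i) (j := Sum.inr j) (by simpa using hij)
      exact h.comp hsq hsq
    have hident : ∀ i, IdentDistrib (fun ω => (z' i ω) ^ 2) (fun ω => (z' 0 ω) ^ 2) ℙ ℙ := by
      intro i
      exact IdentDistrib.comp
        ⟨(hzmeas' i).aemeasurable, (hzmeas' 0).aemeasurable, by rw [hgauss' i, hgauss' 0]⟩ hsq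
    have h := strong_law_ae_real _ hint hpair hident
    have h1 : ℙ[fun ω => (z' 0 ω) ^ 2] = 1 := integral_sq_of_gaussian (hzmeas' 0) (hgauss' 0)
    rwa [h1] at h
  -- second strong law: squares of σ z - σ z'
  have hφ : Measurable (fun p : ℝ × ℝ => (σ * p.1 - σ * p.2) ^ 2) := by measurability
  have hz1 : Integrable (z 0) ℙ := integrable_of_gaussian (hzmeas 0) (hgauss 0)
  have hz'1 : Integrable (z' 0) ℙ := integrable_of_gaussian (hzmeas' 0) (hgauss' 0)
  have hpi0 : IndepFun (z 0) (z' 0) ℙ :=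
    hindep.indepFun (i := Sum.inl 0) (j := Sum.inr 0) (by simp)
  have slln2 : ∀ᵐ ω ∂ℙ,
      Tendsto (fun n : ℕ => (∑ i ∈ range n, (σ * z i ω - σ * z' i ω) ^ 2) / n) atTop
        (nhds (2 * σ ^ 2)) := by
    have hz2 := integrable_sq_of_gaussian (hzmeas 0) (hgauss 0)
    have hz'2 := integrable_sq_of_gaussian (hzmeas' 0) (hgauss' 0)
    have hzz' : Integrable (fun ω => z 0 ω * z' 0 ω) ℙ := hpi0.integrable_mul hz1 hz'1
    have he : (fun ω => (σ * z 0 ω - σ * z' 0 ω) ^ 2)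
        = fun ω => σ ^ 2 * (z 0 ω) ^ 2 + σ ^ 2 * (z' 0 ω) ^ 2
            - 2 * σ ^ 2 * (z 0 ω * z' 0 ω) := by
      funext ω; ring
    have hint : Integrable (fun ω => (σ * z 0 ω - σ * z' 0 ω) ^ 2) ℙ := by
      rw [he]
      exact ((hz2.const_mul _).add (hz'2.const_mul _)).sub (hzz'.const_mul _)
    have hpair : Pairwise (Function.onFun (IndepFun · · ℙ) fun i ω => (σ * z i ω - σ * z' i ω) ^ 2) := by
      intro i j hij
      have h := hindep.indepFun_prodMk_prodMk hmeas
        (Sum.inl i) (Sum.inr i) (Sum.inl j) (Sum.inr j)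
        (by simp [hij]) (by simp) (by simp) (by simp [hij])
      exact h.comp hφ hφ
    have hident : ∀ i, IdentDistrib (fun ω => (σ * z i ω - σ * z' i ω) ^ 2)
        (fun ω => (σ * z 0 ω - σ * z' 0 ω) ^ 2) ℙ ℙ := by
      intro i
      have hpi : IndepFun (z i) (z' i) ℙ :=
        hindep.indepFun (i := Sum.inl i) (j := Sum.inr i) (by simp)
      have hmapi := (indepFun_iff_map_prod_eq_prod_map_map
        (hzmeas i).aemeasurable (hzmeas' i).aemeasurable).mp hpi
      have hmap0 := (indepFun_iff_map_prod_eq_prod_map_map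
        (hzmeas 0).aemeasurable (hzmeas' 0).aemeasurable).mp hpi0
      have hpairid : IdentDistrib (fun ω => (z i ω, z' i ω)) (fun ω => (z 0 ω, z' 0 ω)) ℙ ℙ :=
        ⟨((hzmeas i).prodMk (hzmeas' i)).aemeasurable,
         ((hzmeas 0).prodMk (hzmeas' 0)).aemeasurable,
         by rw [hmapi, hmap0, hgauss i, hgauss 0, hgauss' i, hgauss' 0]⟩
      exact hpairid.comp hφ
    have h := strong_law_ae_real _ hint hpair hident
    have hcross : ∫ ω, z 0 ω * z' 0 ω ∂ℙ = 0 := by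
      have hm := hpi0.integral_mul_eq_mul_integral hz1.aestronglyMeasurable hz'1.aestronglyMeasurable
      have h0 : ∫ ω, z 0 ω ∂ℙ = 0 := integral_of_gaussian (hzmeas 0) (hgauss 0)
      have hmm : ∫ ω, (z 0 * z' 0) ω ∂ℙ = 0 := by rw [hm, h0, zero_mul]
      exact hmm
    have hEW : ℙ[fun ω => (σ * z 0 ω - σ * z' 0 ω) ^ 2] = 2 * σ ^ 2 := by
      calc ℙ[fun ω => (σ * z 0 ω - σ * z' 0 ω) ^ 2]
          = ∫ ω, (σ ^ 2 * (z 0 ω) ^ 2 + σ ^ 2 * (z' 0 ω) ^ 2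
              - 2 * σ ^ 2 * (z 0 ω * z' 0 ω)) ∂ℙ := by rw [← he]
        _ = 2 * σ ^ 2 := by
            have hfint : Integrable (fun ω => σ ^ 2 * (z 0 ω) ^ 2 + σ ^ 2 * (z' 0 ω) ^ 2) ℙ :=
              (hz2.const_mul _).add (hz'2.const_mul _)
            have hgint : Integrable (fun ω => 2 * σ ^ 2 * (z 0 ω * z' 0 ω)) ℙ :=
              hzz'.const_mul _
            have haint : Integrable (fun ω => σ ^ 2 * (z 0 ω) ^ 2) ℙ := hz2.const_mul _
            have hbint : Integrable (fun ω => σ ^ 2 * (z' 0 ω) ^ 2) ℙ := hz'2.const_mul _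
            rw [integral_sub hfint hgint,
              integral_add haint hbint,
              integral_const_mul, integral_const_mul, integral_const_mul,
              integral_sq_of_gaussian (hzmeas 0) (hgauss 0),
              integral_sq_of_gaussian (hzmeas' 0) (hgauss' 0), hcross]
            ring
    rwa [hEW] at h
  -- auxiliary limit: sqrt (τ m) / m → 0
  have hsqrt : Tendsto (fun m : ℕ => Real.sqrt (τ m) / m) atTop (nhds 0) := by
    have h2 : Tendsto (fun m : ℕ => τ m / m * (1 / m)) atTop (nhds (r / KK * 0)) :=
      hτr.mul tendsto_one_div_atTop_nhds_zero_nat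
    rw [mul_zero] at h2
    have h3 := h2.sqrt
    rw [Real.sqrt_zero] at h3
    apply h3.congr'
    filter_upwards [eventually_ge_atTop 1] with m hm
    have hm0 : (m : ℝ) ≠ 0 := Nat.cast_ne_zero.2 (by omega)
    rw [show τ m / (m : ℝ) * (1 / m) = τ m / ((m : ℝ) ^ 2) by rw [div_mul_div_comm, mul_one, sq],
      Real.sqrt_div (hτpos m).le, Real.sqrt_sq (by positivity : (0:ℝ) ≤ (m : ℝ))]
  filter_upwards [slln1, slln2] with ω h1 h2
  constructor
  · rw [Finset.mul_sum]
    apply det_main I hI1 _ (fun i => (σ * z' i ω) ^ 2) (fun i => r / KK * (z' i ω) ^ 2) (σ ^ 2)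
    · intro i hi
      simp only [if_pos hi]
      have heq : ∀ m : ℕ, τ m / m * (z' i ω) ^ 2
          = ((Real.sqrt (τ m) * z' i ω) ^ 2) / (m : ℝ) := by
        intro m
        rw [mul_pow, Real.sq_sqrt (hτpos m).le]
        ring
      exact (hτr.mul_const _).congr heq
    · intro m i hi
      simp only [if_neg hi]
    · have h := h1.const_mul (σ ^ 2)
      rw [mul_one] at h
      apply h.congr
      intro n
      rw [← mul_div_assoc, Finset.mul_sum]
      congr 1
      exact Finset.sum_congr rfl fun i _ => by ring
  · rw [Finset.mul_sum]
    apply det_main I hI1 _ (fun i => (σ * z i ω - σ * z' i ω) ^ 2)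
      (fun i => r / KK * (z' i ω) ^ 2) (2 * σ ^ 2)
    · intro i hi
      simp only [if_pos hi]
      set a := z' i ω
      set b := z i ω
      have h_a : Tendsto (fun m : ℕ => σ ^ 2 * b ^ 2 * (1 / m)) atTop (nhds 0) := by
        simpa using tendsto_one_div_atTop_nhds_zero_nat.const_mul (σ ^ 2 * b ^ 2)
      have h_b : Tendsto (fun m : ℕ => 2 * σ * b * a * (Real.sqrt (τ m) / m)) atTop (nhds 0) := by
        simpa using hsqrt.const_mul (2 * σ * b * a)
      have h_c : Tendsto (fun m : ℕ => τ m / m * a ^ 2) atTop (nhds (r / KK * a ^ 2)) :=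
        hτr.mul_const _
      have hcomb := (h_a.sub h_b).add h_c
      rw [sub_zero, zero_add] at hcomb
      apply hcomb.congr
      intro m
      have hs : (σ * b - Real.sqrt (τ m) * a) ^ 2
          = σ ^ 2 * b ^ 2 - 2 * σ * b * a * Real.sqrt (τ m) + τ m * a ^ 2 := by
        have hq : Real.sqrt (τ m) ^ 2 = τ m := Real.sq_sqrt (hτpos m).le
        calc (σ * b - Real.sqrt (τ m) * a) ^ 2
            = σ ^ 2 * b ^ 2 - 2 * σ * b * a * Real.sqrt (τ m)
              + Real.sqrt (τ m) ^ 2 * a ^ 2 := by ring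
          _ = σ ^ 2 * b ^ 2 - 2 * σ * b * a * Real.sqrt (τ m) + τ m * a ^ 2 := by rw [hq]
      rw [hs]
      ring
    · intro m i hi
      simp only [if_neg hi]
    · exact h2
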